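/- If two rank profile matrices R1 and R2 satisfy that every leading submatrix of R1 and of R2 has the same rank as the corresponding leading submatrix of A, then R1 = R2. -/

import Mathlib

open Matrix

/-- The leading `i×j` submatrix of a matrix. -/
def leadSub {K : Type*} [Field K] {m n : ℕ} (A : Matrix (Fin m) (Fin n) K) {i j : ℕ}
    (hi : i ≤ m) (hj : j ≤ n) : Matrix (Fin i) (Fin j) K :=
  A.submatrix (Fin.castLE hi) (Fin.castLE hj)

/-- An `r`-sub-permutation matrix: rank `r` with exactly `r` nonzero entries, all equal to 1. -/
def IsSubPerm {K : Type*} [Field K] {m n : ℕ} (r : ℕ) (R : Matrix (Fin m) (Fin n) K) : Prop :=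
  (∀ i j, R i j = 0 ∨ R i j = 1) ∧
  {p : Fin m × Fin n | R p.1 p.2 ≠ 0}.ncard = r ∧
  R.rank = r

/-- `R` is the rank profile matrix of `A`: the rank(A)-sub-permutation matrix each of whose
leading submatrices has the same rank as the corresponding leading submatrix of `A`. -/
def IsRPM {K : Type*} [Field K] {m n : ℕ} (A R : Matrix (Fin m) (Fin n) K) : Prop :=
  IsSubPerm A.rank R ∧
  ∀ (i j : ℕ) (hi : i ≤ m) (hj : j ≤ n),
    (leadSub R hi hj).rank = (leadSub A hi hj).rank

/-- `S` is the row rank profile of `A`: the lexicographically smallest set of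
`rank A` indices of linearly independent rows of `A`. -/
def IsRowRP {K : Type*} [Field K] {m n : ℕ} (A : Matrix (Fin m) (Fin n) K)
    (S : Finset (Fin m)) : Prop :=
  S.card = A.rank ∧ LinearIndependent K (fun i : S => A i) ∧
  ∀ T : Finset (Fin m), T.card = A.rank → LinearIndependent K (fun i : T => A i) →
    S = T ∨ List.Lex (· < ·) (S.sort (· ≤ ·)) (T.sort (· ≤ ·))

open Classical in
/-- Row support: the set of indices of nonzero rows. -/
noncomputable def rowSupp {K : Type*} [Field K] {m n : ℕ}
    (R : Matrix (Fin m) (Fin n) K) : Finset (Fin m) :=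
  Finset.univ.filter fun i => ∃ j, R i j ≠ 0

/-- The m×n block matrix [[I_r, 0], [0, 0]]. -/
def Jb (K : Type*) [Field K] (m n r : ℕ) : Matrix (Fin m) (Fin n) K :=
  Matrix.of fun i j => if (i : ℕ) = (j : ℕ) ∧ (i : ℕ) < r then 1 else 0

/-- The pivoting matrix `Π_{P,Q} = P [[I_r,0],[0,0]] Q` of a PLUQ decomposition of rank r. -/
noncomputable def PivMat (K : Type*) [Field K] {m n : ℕ}
    (σ : Equiv.Perm (Fin m)) (τ : Equiv.Perm (Fin n)) (r : ℕ) : Matrix (Fin m) (Fin n) K :=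
  σ.permMatrix K * Jb K m n r * τ.permMatrix K

/-- A permutation of `Fin n` is `k`-monotonically increasing if its last `n-k`
values form a strictly increasing sequence. -/
def MonoInc {n : ℕ} (k : ℕ) (σ : Equiv.Perm (Fin n)) : Prop :=
  ∀ a b : Fin n, k ≤ (a : ℕ) → a < b → σ a < σ b

section Aux
open Finset Module

variable {K : Type*} [Field K]

lemma rank_rows_eq {p q : ℕ} (M : Matrix (Fin p) (Fin q) K) (C : Finset (Fin q))
    (h1 : ∀ a, M a = 0 ∨ ∃ c ∈ C, M a = Pi.single c 1)
    (h2 : ∀ c ∈ C, ∃ a, M a = Pi.single c 1) :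
    M.rank = C.card := by
  classical
  have hspan : Submodule.span K (Set.range M) =
      Submodule.span K (Set.range (fun c : C => (Pi.single (c : Fin q) 1 : Fin q → K))) := by
    apply le_antisymm <;> rw [Submodule.span_le]
    · rintro _ ⟨a, rfl⟩
      rcases h1 a with h | ⟨c, hc, h⟩
      · rw [h]; exact Submodule.zero_mem _
      · rw [h]; exact Submodule.subset_span ⟨⟨c, hc⟩, rfl⟩
    · rintro _ ⟨c, rfl⟩
      obtain ⟨a, ha⟩ := h2 c c.2
      exact Submodule.subset_span ⟨a, ha⟩
  have hli : LinearIndependent K (fun c : C => (Pi.single (c : Fin q) 1 : Fin q → K)) := by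
    have h := (Pi.basisFun K (Fin q)).linearIndependent.comp
      (fun c : C => (c : Fin q)) Subtype.val_injective
    have heq : (⇑(Pi.basisFun K (Fin q)) ∘ fun c : C => (c : Fin q)) =
      fun c : C => (Pi.single (c : Fin q) 1 : Fin q → K) := by
      funext c; simp [Function.comp]
    rwa [heq] at h
  rw [Matrix.rank_eq_finrank_span_row]
  change Module.finrank K (Submodule.span K (Set.range M)) = _
  rw [hspan, finrank_span_eq_card hli, Fintype.card_coe]

/-- support points of a sub-permutation matrix are in distinct rows and columns -/
lemma subperm_inj {m n r : ℕ} {R : Matrix (Fin m) (Fin n) K} (h : IsSubPerm r R) :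
    ∀ p q : Fin m × Fin n, R p.1 p.2 ≠ 0 → R q.1 q.2 ≠ 0 → p.1 = q.1 ∨ p.2 = q.2 → p = q := by
  classical
  obtain ⟨h01, hcard, hrank⟩ := h
  set S : Finset (Fin m × Fin n) := Finset.univ.filter (fun p => R p.1 p.2 ≠ 0) with hS
  have hmemS : ∀ p : Fin m × Fin n, p ∈ S ↔ R p.1 p.2 ≠ 0 := by
    intro p; simp [hS]
  have hScard : S.card = r := by
    rw [← hcard]
    have : {p : Fin m × Fin n | R p.1 p.2 ≠ 0} = ↑S := by
      ext p; simp [hmemS p]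
    rw [this, Set.ncard_coe_finset]
  have hrow0 : ∀ a : Fin m, (¬ ∃ j, R a j ≠ 0) → R a = 0 := by
    intro a ha
    push_neg at ha
    funext j'
    simpa using ha j'
  -- rank ≤ card of row support
  set rowset : Finset (Fin m) := S.image Prod.fst with hrowset
  have hr1 : R.rank ≤ rowset.card := by
    rw [Matrix.rank_eq_finrank_span_row]
    have hsub : Set.range R ⊆ insert 0 ((rowset.image R : Finset (Fin n → K)) : Set (Fin n → K)) := by
      rintro _ ⟨a, rfl⟩
      by_cases hex : ∃ j, R a j ≠ 0
      · obtain ⟨j, hj⟩ := hex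
        right
        exact Finset.mem_coe.mpr (Finset.mem_image.mpr ⟨a,
          Finset.mem_image.mpr ⟨(a, j), (hmemS _).mpr hj, rfl⟩, rfl⟩)
      · left; exact hrow0 a hex
    calc finrank K (Submodule.span K (Set.range R))
        ≤ finrank K (Submodule.span K (insert 0 ((rowset.image R : Finset (Fin n → K)) : Set (Fin n → K)))) :=
          Submodule.finrank_mono (Submodule.span_mono hsub)
      _ = finrank K (Submodule.span K ((rowset.image R : Finset (Fin n → K)) : Set (Fin n → K))) := by
          rw [Submodule.span_insert_zero]
      _ ≤ (rowset.image R).card := finrank_span_finset_le_card _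
      _ ≤ rowset.card := Finset.card_image_le
  have hrowcard : rowset.card = S.card := by
    have h2 : rowset.card ≤ S.card := Finset.card_image_le
    omega
  have hfst : Set.InjOn Prod.fst (S : Set (Fin m × Fin n)) := Finset.card_image_iff.mp hrowcard
  -- each nonzero row is a standard basis vector
  have hsingle : ∀ (a : Fin m) (j0 : Fin n), R a j0 ≠ 0 → R a = Pi.single j0 1 := by
    intro a j0 hj0
    funext j'
    by_cases hj : j' = j0
    · subst hj
      rcases h01 a j' with h | h
      · exact absurd h hj0
      · simp [h]
    · have hz : R a j' = 0 := by
        by_contra hne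
        have hmem1 : (a, j') ∈ S := (hmemS _).mpr hne
        have hmem2 : (a, j0) ∈ S := (hmemS _).mpr hj0
        have := hfst (Finset.mem_coe.mpr hmem1) (Finset.mem_coe.mpr hmem2) rfl
        exact hj (congrArg Prod.snd this)
      simp [hz, Pi.single_eq_of_ne hj]
  set colset : Finset (Fin n) := S.image Prod.snd with hcolset
  have hrank2 : R.rank = colset.card := by
    apply rank_rows_eq
    · intro a
      by_cases hex : ∃ j, R a j ≠ 0
      · obtain ⟨j, hj⟩ := hex
        exact Or.inr ⟨j, Finset.mem_image.mpr ⟨(a, j), (hmemS _).mpr hj, rfl⟩, hsingle a j hj⟩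
      · exact Or.inl (hrow0 a hex)
    · intro c hc
      obtain ⟨p, hp, rfl⟩ := Finset.mem_image.mp hc
      exact ⟨p.1, hsingle p.1 p.2 ((hmemS _).mp hp)⟩
  have hcolcard : colset.card = S.card := by
    have h2 : colset.card ≤ S.card := Finset.card_image_le
    omega
  have hsnd : Set.InjOn Prod.snd (S : Set (Fin m × Fin n)) := Finset.card_image_iff.mp hcolcard
  intro p q hp hq hor
  have hpS : p ∈ (S : Set (Fin m × Fin n)) := Finset.mem_coe.mpr ((hmemS _).mpr hp)
  have hqS : q ∈ (S : Set (Fin m × Fin n)) := Finset.mem_coe.mpr ((hmemS _).mpr hq)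
  rcases hor with h | h
  · exact hfst hpS hqS h
  · exact hsnd hpS hqS h

end Aux

open Classical in
/-- support points inside the leading i×j block -/
noncomputable def suppF {K : Type*} [Field K] {m n : ℕ} (R : Matrix (Fin m) (Fin n) K)
    (i j : ℕ) : Finset (Fin m × Fin n) :=
  Finset.univ.filter fun p => R p.1 p.2 ≠ 0 ∧ (p.1 : ℕ) < i ∧ (p.2 : ℕ) < j

section Aux2
open Finset
variable {K : Type*} [Field K]

lemma mem_suppF {m n : ℕ} {R : Matrix (Fin m) (Fin n) K} {i j : ℕ} {p : Fin m × Fin n} :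
    p ∈ suppF R i j ↔ R p.1 p.2 ≠ 0 ∧ (p.1 : ℕ) < i ∧ (p.2 : ℕ) < j := by
  simp [suppF]

lemma subperm_single {m n r : ℕ} {R : Matrix (Fin m) (Fin n) K} (h : IsSubPerm r R)
    {a : Fin m} {j0 : Fin n} (hj0 : R a j0 ≠ 0) : R a = Pi.single j0 1 := by
  funext j'
  by_cases hj : j' = j0
  · subst hj
    rcases h.1 a j' with h' | h'
    · exact absurd h' hj0
    · simp [h']
  · have hz : R a j' = 0 := by
      by_contra hne
      exact hj (congrArg Prod.snd (subperm_inj h (a, j') (a, j0) hne hj0 (Or.inl rfl)))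
    simp [hz, Pi.single_eq_of_ne hj]

lemma leadSub_rank {m n r : ℕ} {R : Matrix (Fin m) (Fin n) K} (h : IsSubPerm r R)
    {i j : ℕ} (hi : i ≤ m) (hj : j ≤ n) :
    (leadSub R hi hj).rank = (suppF R i j).card := by
  classical
  set F := suppF R i j with hF
  set C : Finset (Fin j) :=
    F.attach.image (fun p => (⟨(p.1.2 : ℕ), (mem_suppF.mp p.2).2.2⟩ : Fin j)) with hC
  have hCcard : C.card = F.card := by
    rw [hC, Finset.card_image_of_injOn, Finset.card_attach]
    intro p _ q _ heq
    have h2 : p.1.2 = q.1.2 := by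
      have := congrArg Fin.val heq
      simp only at this
      exact Fin.ext this
    have hp := mem_suppF.mp p.2
    have hq := mem_suppF.mp q.2
    exact Subtype.ext (subperm_inj h p.1 q.1 hp.1 hq.1 (Or.inr h2))
  rw [← hCcard]
  apply rank_rows_eq
  · intro a
    by_cases hex : ∃ c : Fin j, R (Fin.castLE hi a) (Fin.castLE hj c) ≠ 0
    · obtain ⟨c, hc⟩ := hex
      right
      refine ⟨c, ?_, ?_⟩
      · have hmem : (Fin.castLE hi a, Fin.castLE hj c) ∈ F :=
          mem_suppF.mpr ⟨hc, by simpa using a.isLt, by simpa using c.isLt⟩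
        exact Finset.mem_image.mpr ⟨⟨_, hmem⟩, Finset.mem_attach _ _, Fin.ext rfl⟩
      · have hrow : R (Fin.castLE hi a) = Pi.single (Fin.castLE hj c) 1 := subperm_single h hc
        funext c'
        by_cases hcc : c' = c
        · subst hcc
          calc leadSub R hi hj a c' = R (Fin.castLE hi a) (Fin.castLE hj c') := rfl
            _ = (Pi.single (Fin.castLE hj c') (1:K) : Fin n → K) (Fin.castLE hj c') := by rw [hrow]
            _ = 1 := Pi.single_eq_same _ _
            _ = (Pi.single c' (1:K) : Fin j → K) c' := by simp
        · have e1 : Fin.castLE hj c' ≠ Fin.castLE hj c :=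
            fun hv => hcc (Fin.ext (by simpa [Fin.ext_iff] using hv))
          calc leadSub R hi hj a c' = R (Fin.castLE hi a) (Fin.castLE hj c') := rfl
            _ = 0 := by rw [hrow]; exact Pi.single_eq_of_ne e1 1
            _ = (Pi.single c (1:K) : Fin j → K) c' := by rw [Pi.single_eq_of_ne hcc]
    · left
      push_neg at hex
      funext c
      simpa [leadSub] using hex c
  · intro c hc
    obtain ⟨⟨p, hpF⟩, -, rfl⟩ := Finset.mem_image.mp hc
    obtain ⟨hRp, hp1, hp2⟩ := mem_suppF.mp hpF
    refine ⟨⟨(p.1 : ℕ), hp1⟩, ?_⟩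
    have hrow : R p.1 = Pi.single p.2 1 := subperm_single h hRp
    have hone : R p.1 p.2 = 1 := by
      rcases h.1 p.1 p.2 with h' | h'
      · exact absurd h' hRp
      · exact h'
    funext c'
    by_cases hcc : (c' : ℕ) = (p.2 : ℕ)
    · have e1 : Fin.castLE hj c' = p.2 := Fin.ext hcc
      have e2 : c' = (⟨(p.2 : ℕ), hp2⟩ : Fin j) := Fin.ext hcc
      calc leadSub R hi hj ⟨(p.1 : ℕ), hp1⟩ c' = R p.1 (Fin.castLE hj c') := rfl
        _ = R p.1 p.2 := by rw [e1]
        _ = 1 := hone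
        _ = (Pi.single (⟨(p.2 : ℕ), hp2⟩ : Fin j) (1:K) : Fin j → K) c' := by
            rw [e2]; simp
    · have e1 : Fin.castLE hj c' ≠ p.2 := fun hv => hcc (by simpa [Fin.ext_iff] using hv)
      have e2 : c' ≠ (⟨(p.2 : ℕ), hp2⟩ : Fin j) := fun hv => hcc (congrArg Fin.val hv)
      calc leadSub R hi hj ⟨(p.1 : ℕ), hp1⟩ c' = R p.1 (Fin.castLE hj c') := rfl
        _ = 0 := by rw [hrow]; exact Pi.single_eq_of_ne e1 1
        _ = (Pi.single (⟨(p.2 : ℕ), hp2⟩ : Fin j) (1:K) : Fin j → K) c' := by rw [Pi.single_eq_of_ne e2]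
end Aux2

section Aux3
variable {K : Type*} [Field K]

lemma suppF_step {m n : ℕ} (R : Matrix (Fin m) (Fin n) K) (i : Fin m) (j : Fin n) (t : ℕ)
    (ht : (R i j = 0 ∧ t = 0) ∨ (R i j ≠ 0 ∧ t = 1)) :
    (suppF R ((i : ℕ)+1) ((j : ℕ)+1)).card + (suppF R i j).card
      = (suppF R i ((j : ℕ)+1)).card + (suppF R ((i : ℕ)+1) j).card + t := by
  classical
  set S1 := suppF R (i : ℕ) ((j : ℕ)+1) with hS1
  set S2 := suppF R ((i : ℕ)+1) (j : ℕ) with hS2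
  have hinter : S1 ∩ S2 = suppF R (i : ℕ) (j : ℕ) := by
    ext p
    simp only [hS1, hS2, Finset.mem_inter, mem_suppF]
    constructor
    · rintro ⟨⟨h0, ha, -⟩, ⟨-, -, hb⟩⟩
      exact ⟨h0, ha, hb⟩
    · rintro ⟨h0, ha, hb⟩
      exact ⟨⟨h0, ha, by omega⟩, ⟨h0, by omega, hb⟩⟩
  have hcui := Finset.card_union_add_card_inter S1 S2
  rw [hinter] at hcui
  rcases ht with ⟨h0, rfl⟩ | ⟨h0, rfl⟩
  · have hun : suppF R ((i : ℕ)+1) ((j : ℕ)+1) = S1 ∪ S2 := by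
      ext p
      simp only [hS1, hS2, Finset.mem_union, mem_suppF]
      constructor
      · rintro ⟨hR, l1, l2⟩
        by_cases hp1 : (p.1 : ℕ) < i
        · exact Or.inl ⟨hR, hp1, l2⟩
        · by_cases hp2 : (p.2 : ℕ) < j
          · exact Or.inr ⟨hR, l1, hp2⟩
          · exfalso
            have e1 : p.1 = i := Fin.ext (by omega)
            have e2 : p.2 = j := Fin.ext (by omega)
            have hpe : p = (i, j) := Prod.ext e1 e2
            rw [hpe] at hR
            exact hR h0
      · rintro (⟨hR, l1, l2⟩ | ⟨hR, l1, l2⟩) <;> exact ⟨hR, by omega, by omega⟩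
    rw [hun]
    omega
  · have hun : suppF R ((i : ℕ)+1) ((j : ℕ)+1) = insert (i, j) (S1 ∪ S2) := by
      ext p
      simp only [hS1, hS2, Finset.mem_insert, Finset.mem_union, mem_suppF]
      constructor
      · rintro ⟨hR, l1, l2⟩
        by_cases hp1 : (p.1 : ℕ) < i
        · exact Or.inr (Or.inl ⟨hR, hp1, l2⟩)
        · by_cases hp2 : (p.2 : ℕ) < j
          · exact Or.inr (Or.inr ⟨hR, l1, hp2⟩)
          · have e1 : p.1 = i := Fin.ext (by omega)
            have e2 : p.2 = j := Fin.ext (by omega)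
            exact Or.inl (Prod.ext e1 e2)
      · rintro (rfl | ⟨hR, l1, l2⟩ | ⟨hR, l1, l2⟩)
        · exact ⟨h0, Nat.lt_succ_self _, Nat.lt_succ_self _⟩
        · exact ⟨hR, by omega, by omega⟩
        · exact ⟨hR, by omega, by omega⟩
    have hnot : (i, j) ∉ S1 ∪ S2 := by
      intro hmem
      rcases Finset.mem_union.mp hmem with hm | hm
      · exact Nat.lt_irrefl _ (mem_suppF.mp hm).2.1
      · exact Nat.lt_irrefl _ (mem_suppF.mp hm).2.2
    rw [hun, Finset.card_insert_of_notMem hnot]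
    omega
end Aux3


/-- uniqueness of the rank profile matrix. -/
theorem stmt2 {K : Type*} [Field K] {m n : ℕ} (A R1 R2 : Matrix (Fin m) (Fin n) K)
    (h1 : IsRPM A R1) (h2 : IsRPM A R2) : R1 = R2 := by
  classical
  obtain ⟨hs1, hL1⟩ := h1
  obtain ⟨hs2, hL2⟩ := h2
  have key : ∀ (i j : ℕ) (hi : i ≤ m) (hj : j ≤ n),
      (suppF R1 i j).card = (suppF R2 i j).card := by
    intro i j hi hj
    rw [← leadSub_rank hs1 hi hj, ← leadSub_rank hs2 hi hj, hL1 i j hi hj, hL2 i j hi hj]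
  ext i j
  have him : (i : ℕ) + 1 ≤ m := i.isLt
  have hjn : (j : ℕ) + 1 ≤ n := j.isLt
  have k11 := key ((i : ℕ)+1) ((j : ℕ)+1) him hjn
  have k00 := key (i : ℕ) (j : ℕ) (le_of_lt i.isLt) (le_of_lt j.isLt)
  have k01 := key (i : ℕ) ((j : ℕ)+1) (le_of_lt i.isLt) hjn
  have k10 := key ((i : ℕ)+1) (j : ℕ) him (le_of_lt j.isLt)
  by_cases e1 : R1 i j = 0 <;> by_cases e2 : R2 i j = 0
  · rw [e1, e2]
  · have s1 := suppF_step R1 i j 0 (Or.inl ⟨e1, rfl⟩)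
    have s2 := suppF_step R2 i j 1 (Or.inr ⟨e2, rfl⟩)
    omega
  · have s1 := suppF_step R1 i j 1 (Or.inr ⟨e1, rfl⟩)
    have s2 := suppF_step R2 i j 0 (Or.inl ⟨e2, rfl⟩)
    omega
  · rcases hs1.1 i j with h | h
    · exact absurd h e1
    · rcases hs2.1 i j with h' | h'
      · exact absurd h' e2
      · rw [h, h']
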